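/- Define Ēₙ(f) = limsup_{x→∞} (Sⁿf)(x) for f ∈ L^∞(ℝ₊), where S is (Sg)(x)=e^{-x}∫₀ˣ g(t)eᵗdt. Then for every f, M̄₁(f) ≤ Ēₙ(f) for all n ≥ 1, where M̄₁(f) = lim_{θ→∞} limsup_{x→∞}(1/θ)∫ₓ^{x+θ} f(t)dt. In particular M̄₁(f) ≤ lim_{n→∞} Ēₙ(f) =: Ē_∞(f). -/

import Mathlib

open Filter MeasureTheory Set

noncomputable def Sop (f : ℝ → ℝ) (x : ℝ) : ℝ :=
  Real.exp (-x) * ∫ t in (0:ℝ)..x, f t * Real.exp t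

noncomputable def M1 (f : ℝ → ℝ) : ℝ :=
  limsup (fun θ : ℝ =>
    limsup (fun x : ℝ => (1/θ) * ∫ t in x..(x+θ), f t) atTop) atTop

/-- `Ēₙ(f) = limsup_{x→∞} (Sⁿf)(x)`. -/
noncomputable def En (f : ℝ → ℝ) (n : ℕ) : ℝ := limsup (Sop^[n] f) atTop

lemma exp_int (a b : ℝ) : ∫ t in a..b, Real.exp (-t) = Real.exp (-a) - Real.exp (-b) := by
  rw [intervalIntegral.integral_comp_neg (fun t => Real.exp t), integral_exp]

-- bounded measurable => interval integrable
lemma meas_bdd_intInt {ψ : ℝ → ℝ} (hψ : Measurable ψ) {a b D : ℝ}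
    (hD : ∀ t ∈ Set.uIcc a b, |ψ t| ≤ D) : IntervalIntegrable ψ volume a b := by
  haveI : IsFiniteMeasure (volume.restrict (Set.uIoc a b)) := by
    unfold Set.uIoc; infer_instance
  rw [intervalIntegrable_iff]
  refine Integrable.mono' (integrable_const D) hψ.aestronglyMeasurable.restrict ?_
  refine (ae_restrict_iff' measurableSet_uIoc).2 (ae_of_all _ fun t ht => ?_)
  exact hD t (Set.uIoc_subset_uIcc ht)

-- Fubini on the triangle
lemma fubini_tri {h : ℝ → ℝ} (hm : Measurable h) {x y : ℝ}
    (hI : IntegrableOn h (Set.Ioc x y)) :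
    ∫ t in Set.Ioc x y, Real.exp (-t) * (∫ s in x..t, h s)
      = ∫ s in Set.Ioc x y, (Real.exp (-s) - Real.exp (-y)) * h s := by
  have hmeasIoc : MeasurableSet (Set.Ioc x y) := measurableSet_Ioc
  set K : ℝ → ℝ → ℝ := fun t s => Real.exp (-t) * Set.indicator (Set.Iic t) h s with hK
  have hint : Integrable (Function.uncurry K)
      ((volume.restrict (Set.Ioc x y)).prod (volume.restrict (Set.Ioc x y))) := by
    have hKmeas : Measurable (Function.uncurry K) := by
      have h1 : Measurable fun p : ℝ × ℝ => Real.exp (-p.1) * h p.2 :=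
        ((Real.measurable_exp.comp measurable_neg).comp measurable_fst).mul (hm.comp measurable_snd)
      have h2 : MeasurableSet {p : ℝ × ℝ | p.2 ≤ p.1} := measurableSet_le measurable_snd measurable_fst
      have : Function.uncurry K = Set.indicator {p : ℝ × ℝ | p.2 ≤ p.1}
          (fun p => Real.exp (-p.1) * h p.2) := by
        funext p
        by_cases hp : p.2 ≤ p.1 <;>
          simp [Function.uncurry, hK, Set.indicator, hp]
      rw [this]
      exact h1.indicator h2
    refine Integrable.mono'
      (g := fun p : ℝ × ℝ => Real.exp (-x) * |h p.2|) ?_ hKmeas.aestronglyMeasurable ?_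
    · exact Integrable.mul_prod (integrable_const (μ := volume.restrict (Set.Ioc x y)) _) hI.abs
    · rw [Measure.prod_restrict]
      refine (ae_restrict_iff' (hmeasIoc.prod hmeasIoc)).2 (ae_of_all _ fun p hp => ?_)
      have h1 : |Set.indicator (Set.Iic p.1) h p.2| ≤ |h p.2| := by
        by_cases hc : p.2 ∈ Set.Iic p.1 <;> simp [Set.indicator, hc, abs_nonneg]
      have h2 : Real.exp (-p.1) ≤ Real.exp (-x) :=
        Real.exp_le_exp.2 (neg_le_neg hp.1.1.le)
      calc ‖K p.1 p.2‖ = Real.exp (-p.1) * |Set.indicator (Set.Iic p.1) h p.2| := by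
            rw [hK]; simp [abs_mul, abs_of_pos (Real.exp_pos _)]
        _ ≤ Real.exp (-x) * |h p.2| :=
            mul_le_mul h2 h1 (abs_nonneg _) (Real.exp_pos _).le
  have hswap := MeasureTheory.integral_integral_swap hint
  calc ∫ t in Set.Ioc x y, Real.exp (-t) * (∫ s in x..t, h s)
      = ∫ t in Set.Ioc x y, ∫ s in Set.Ioc x y, K t s := by
        refine setIntegral_congr_fun hmeasIoc fun t ht => ?_
        have h1 : ∫ s in x..t, h s = ∫ s in Set.Ioc x y, Set.indicator (Set.Iic t) h s := by
          rw [MeasureTheory.setIntegral_indicator measurableSet_Iic,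
            Set.Ioc_inter_Iic, min_eq_right ht.2, intervalIntegral.integral_of_le ht.1.le]
        rw [h1, hK]
        simp only []
        rw [MeasureTheory.integral_const_mul]
    _ = ∫ s in Set.Ioc x y, ∫ t in Set.Ioc x y, K t s := hswap
    _ = ∫ s in Set.Ioc x y, (Real.exp (-s) - Real.exp (-y)) * h s := by
        refine setIntegral_congr_fun hmeasIoc fun s hs => ?_
        have h0 : (fun t => K t s) = Set.indicator (Set.Ici s) (fun t => Real.exp (-t) * h s) := by
          funext t
          by_cases hc : s ≤ t <;>
            simp [hK, Set.indicator, hc]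
        rw [h0, MeasureTheory.setIntegral_indicator measurableSet_Ici]
        have h1 : Set.Ioc x y ∩ Set.Ici s = Set.Icc s y := by
          ext t
          constructor
          · rintro ⟨⟨_, h2⟩, h3⟩; exact ⟨h3, h2⟩
          · rintro ⟨h2, h3⟩; exact ⟨⟨lt_of_lt_of_le hs.1 h2, h3⟩, h2⟩
        rw [h1, MeasureTheory.integral_Icc_eq_integral_Ioc,
          ← intervalIntegral.integral_of_le hs.2,
          intervalIntegral.integral_mul_const, exp_int]

-- the step identity : ∫ₓʸ g - ∫ₓʸ Sg = Sg y - Sg x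
lemma step_id {g : ℝ → ℝ} (hm : Measurable g)
    (hIg : ∀ a b : ℝ, IntervalIntegrable g volume a b)
    (hIh : ∀ a b : ℝ, IntervalIntegrable (fun t => g t * Real.exp t) volume a b)
    {x y : ℝ} (hxy : x ≤ y) :
    (∫ t in x..y, g t) - (∫ t in x..y, Sop g t) = Sop g y - Sop g x := by
  set h : ℝ → ℝ := fun t => g t * Real.exp t with hh
  have hmh : Measurable h := hm.mul Real.measurable_exp
  set F : ℝ → ℝ := fun t => ∫ s in (0:ℝ)..t, h s with hF
  have hFc : Continuous F := intervalIntegral.continuous_primitive hIh 0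
  have hSop : ∀ t, Sop g t = Real.exp (-t) * F t := fun t => rfl
  -- split the Sop integral
  have hsplit : ∀ t ∈ Set.Ioc x y, Real.exp (-t) * F t
      = Real.exp (-t) * F x + Real.exp (-t) * (∫ s in x..t, h s) := by
    intro t ht
    have : F t = F x + ∫ s in x..t, h s :=
      (intervalIntegral.integral_add_adjacent_intervals (hIh 0 x) (hIh x t)).symm
    rw [this, mul_add]
  have hc1 : Continuous fun t => Real.exp (-t) * F x :=
    (Real.continuous_exp.comp continuous_neg).mul continuous_const
  have hc2 : Continuous fun t => Real.exp (-t) * (∫ s in x..t, h s) :=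
    (Real.continuous_exp.comp continuous_neg).mul (intervalIntegral.continuous_primitive hIh x)
  have key : (∫ t in x..y, Sop g t)
      = F x * (Real.exp (-x) - Real.exp (-y)) + ((∫ t in x..y, g t) - Real.exp (-y) * (F y - F x)) := by
    have e0 : (∫ t in x..y, Sop g t) = ∫ t in Set.Ioc x y, Real.exp (-t) * F t := by
      rw [intervalIntegral.integral_of_le hxy]; rfl
    rw [e0, setIntegral_congr_fun measurableSet_Ioc hsplit, MeasureTheory.integral_add
        (hc1.integrableOn_Ioc) (hc2.integrableOn_Ioc)]
    have e1 : ∫ t in Set.Ioc x y, Real.exp (-t) * F x = F x * (Real.exp (-x) - Real.exp (-y)) := by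
      rw [← intervalIntegral.integral_of_le hxy, intervalIntegral.integral_mul_const, exp_int]
      ring
    have e2 : ∫ t in Set.Ioc x y, Real.exp (-t) * (∫ s in x..t, h s)
        = (∫ t in x..y, g t) - Real.exp (-y) * (F y - F x) := by
      rw [fubini_tri hmh ((hIh x y).1.mono_set (by simp [Set.uIoc_of_le hxy]))]
      have e3 : ∀ s ∈ Set.Ioc x y, (Real.exp (-s) - Real.exp (-y)) * h s
          = g s - Real.exp (-y) * h s := by
        intro s _
        have : Real.exp (-s) * h s = g s := by
          rw [hh]; simp only []
          rw [Real.exp_neg]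
          field_simp
        rw [sub_mul, this]
      rw [setIntegral_congr_fun measurableSet_Ioc e3]
      have hIg' : IntegrableOn g (Set.Ioc x y) volume :=
        (hIg x y).1.mono_set (by simp [Set.uIoc_of_le hxy])
      have hIh' : IntegrableOn h (Set.Ioc x y) volume :=
        (hIh x y).1.mono_set (by simp [Set.uIoc_of_le hxy])
      rw [integral_sub hIg' (hIh'.const_mul _), MeasureTheory.integral_const_mul,
        ← intervalIntegral.integral_of_le hxy, ← intervalIntegral.integral_of_le hxy]
      have h5 : (∫ s in x..y, h s) = F y - F x := by
        have h4 := intervalIntegral.integral_add_adjacent_intervals (hIh 0 x) (hIh x y)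
        rw [hF]; simp only []
        linarith
      rw [h5]
    rw [e1, e2]
  rw [key, hSop, hSop]
  ring

-- bound on Sop
lemma Sop_bound {g : ℝ → ℝ} {C : ℝ} (hC : 0 ≤ C)
    (hIh : ∀ a b : ℝ, IntervalIntegrable (fun t => g t * Real.exp t) volume a b)
    (hb : ∀ t, 0 ≤ t → |g t| ≤ C) {x : ℝ} (hx : 0 ≤ x) : |Sop g x| ≤ C := by
  have h1 : |∫ t in (0:ℝ)..x, g t * Real.exp t| ≤ C * (Real.exp x - 1) := by
    calc |∫ t in (0:ℝ)..x, g t * Real.exp t|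
        ≤ ∫ t in (0:ℝ)..x, |g t * Real.exp t| :=
          intervalIntegral.abs_integral_le_integral_abs hx
      _ ≤ ∫ t in (0:ℝ)..x, C * Real.exp t := by
          refine intervalIntegral.integral_mono_on hx (hIh 0 x).abs
            (Continuous.intervalIntegrable (by continuity) _ _) fun t ht => ?_
          rw [abs_mul, abs_of_pos (Real.exp_pos t)]
          exact mul_le_mul_of_nonneg_right (hb t ht.1) (Real.exp_pos t).le
      _ = C * (Real.exp x - 1) := by
          rw [intervalIntegral.integral_const_mul, integral_exp, Real.exp_zero]
  have h2 : |Sop g x| = Real.exp (-x) * |∫ t in (0:ℝ)..x, g t * Real.exp t| := by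
    rw [Sop, abs_mul, abs_of_pos (Real.exp_pos _)]
  rw [h2]
  have h3 : Real.exp (-x) * |∫ t in (0:ℝ)..x, g t * Real.exp t|
      ≤ Real.exp (-x) * (C * (Real.exp x - 1)) :=
    mul_le_mul_of_nonneg_left h1 (Real.exp_pos _).le
  refine h3.trans ?_
  have h4 : Real.exp (-x) * Real.exp x = 1 := by
    rw [← Real.exp_add]; simp
  have h5 : 0 < Real.exp (-x) := Real.exp_pos _
  nlinarith

-- the invariant
def InvC (C : ℝ) (g : ℝ → ℝ) : Prop :=
  Measurable g ∧ (∀ a b : ℝ, IntervalIntegrable g volume a b) ∧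
    (∀ a b : ℝ, IntervalIntegrable (fun t => g t * Real.exp t) volume a b) ∧
    (∀ t : ℝ, 0 ≤ t → |g t| ≤ C)

lemma InvC_Sop {C : ℝ} (hC : 0 ≤ C) {g : ℝ → ℝ} (hg : InvC C g) : InvC C (Sop g) := by
  obtain ⟨hm, hIg, hIh, hb⟩ := hg
  have hcont : Continuous (Sop g) := by
    have : Continuous fun x => Real.exp (-x) * ∫ t in (0:ℝ)..x, g t * Real.exp t :=
      (Real.continuous_exp.comp continuous_neg).mul (intervalIntegral.continuous_primitive hIh 0)
    exact this
  exact ⟨hcont.measurable, fun a b => hcont.intervalIntegrable a b,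
    fun a b => (hcont.mul Real.continuous_exp).intervalIntegrable a b,
    fun t ht => Sop_bound hC hIh hb ht⟩

lemma InvC_iter {f : ℝ → ℝ} {C : ℝ} (hf : Measurable f) (hbd : ∀ x, |f x| ≤ C) :
    ∀ n : ℕ, InvC C (Sop^[n] f) := by
  have hC : 0 ≤ C := (abs_nonneg _).trans (hbd 0)
  intro n
  induction n with
  | zero =>
      refine ⟨hf, fun a b => meas_bdd_intInt hf fun t _ => hbd t, fun a b => ?_, fun t _ => hbd t⟩
      refine meas_bdd_intInt (hf.mul Real.measurable_exp)
        (D := C * Real.exp (max a b)) fun t ht => ?_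
      rw [Pi.mul_apply, abs_mul, abs_of_pos (Real.exp_pos t)]
      have ht2 : t ≤ max a b := by
        rcases le_total a b with hab | hab
        · rw [Set.uIcc_of_le hab] at ht; exact ht.2.trans (le_max_right a b)
        · rw [Set.uIcc_of_ge hab] at ht; exact ht.2.trans (le_max_left a b)
      exact mul_le_mul (hbd t) (Real.exp_le_exp.2 ht2) (Real.exp_pos t).le hC
  | succ n ih =>
      rw [Function.iterate_succ_apply']
      exact InvC_Sop hC ih

-- telescoping bound
lemma telescope {f : ℝ → ℝ} {C : ℝ} (hf : Measurable f) (hbd : ∀ x, |f x| ≤ C) :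
    ∀ n : ℕ, ∀ x y : ℝ, 0 ≤ x → x ≤ y →
      |(∫ t in x..y, f t) - ∫ t in x..y, Sop^[n] f t| ≤ 2 * C * n := by
  intro n
  induction n with
  | zero => intro x y _ _; simp
  | succ n ih =>
      intro x y hx0 hxy
      obtain ⟨hm, hIg, hIh, hb⟩ := InvC_iter hf hbd n
      have hid := step_id hm hIg hIh hxy
      have hb' := (InvC_iter hf hbd (n+1)).2.2.2
      have e : (∫ t in x..y, f t) - ∫ t in x..y, Sop^[n+1] f t
          = ((∫ t in x..y, f t) - ∫ t in x..y, Sop^[n] f t)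
            + (Sop^[n+1] f y - Sop^[n+1] f x) := by
        have : Sop^[n+1] f = Sop (Sop^[n] f) := Function.iterate_succ_apply' Sop n f
        rw [this]
        linarith [hid]
      rw [e]
      have h1 := hb' y (hx0.trans hxy)
      have h2 := hb' x hx0
      have h3 := ih x y hx0 hxy
      have := abs_add_le ((∫ t in x..y, f t) - ∫ t in x..y, Sop^[n] f t)
        (Sop^[n+1] f y - Sop^[n+1] f x)
      have h4 := abs_sub (Sop^[n+1] f y) (Sop^[n+1] f x)
      push_cast
      rw [abs_sub_comm] at h4
      calc |_ + _| ≤ _ := this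
        _ ≤ 2 * C * n + (|Sop^[n+1] f y| + |Sop^[n+1] f x|) := by
            refine add_le_add h3 ?_
            exact (abs_sub _ _)
        _ ≤ 2 * C * n + (C + C) := by linarith
        _ = 2 * C * (n + 1) := by ring

/-- `M̄₁(f) ≤ Ēₙ(f)` for all `n ≥ 1`; in particular `M̄₁(f) ≤ Ē_∞(f) = lim_n Ēₙ(f)`. -/
theorem stmt16 (f : ℝ → ℝ) (C : ℝ) (hf : Measurable f) (hbd : ∀ x, |f x| ≤ C) :
    (∀ n : ℕ, 1 ≤ n → M1 f ≤ En f n) ∧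
    (∀ L : ℝ, Tendsto (fun n : ℕ => En f n) atTop (nhds L) → M1 f ≤ L) := by
  have hC : 0 ≤ C := (abs_nonneg _).trans (hbd 0)
  have hval : ∀ θ x : ℝ, |(1/θ) * ∫ t in x..(x+θ), f t| ≤ C := by
    intro θ x
    by_cases hθ : θ = 0
    · simp [hθ, hC]
    · have h1 : ‖∫ t in x..(x+θ), f t‖ ≤ C * |x + θ - x| :=
        intervalIntegral.norm_integral_le_of_norm_le_const fun t _ => by
          rw [Real.norm_eq_abs]; exact hbd t
      have h2 : |x + θ - x| = |θ| := by congr 1; ring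
      rw [Real.norm_eq_abs, h2] at h1
      rw [abs_mul]
      calc |1/θ| * |∫ t in x..(x+θ), f t| ≤ |1/θ| * (C * |θ|) :=
            mul_le_mul_of_nonneg_left h1 (abs_nonneg _)
        _ = C := by
            rw [abs_div, abs_one]
            have : |θ| ≠ 0 := fun hc => hθ (abs_eq_zero.1 hc)
            field_simp
  set A : ℝ → ℝ := fun θ => limsup (fun x : ℝ => (1/θ) * ∫ t in x..(x+θ), f t) atTop with hA
  have hM1 : M1 f = limsup A atTop := rfl
  have hAlb : ∀ θ, -C ≤ A θ := fun θ =>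
    Filter.le_limsup_of_frequently_le
      (Frequently.of_forall fun x => (abs_le.1 (hval θ x)).1)
      ⟨C, eventually_map.2 (Eventually.of_forall fun x => (abs_le.1 (hval θ x)).2)⟩
  have key : ∀ n : ℕ, 1 ≤ n → M1 f ≤ En f n := by
    intro n _
    set g := Sop^[n] f with hg
    obtain ⟨hm, hIg, hIh, hb⟩ := InvC_iter hf hbd n
    refine le_of_forall_pos_le_add fun ε hε => ?_
    set L := En f n with hL
    have hgb : IsBoundedUnder (· ≤ ·) atTop g :=
      ⟨C, eventually_map.2 (by
        filter_upwards [eventually_ge_atTop (0:ℝ)] with t ht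
        exact (abs_le.1 (hb t ht)).2)⟩
    have hlt : limsup g atTop < L + ε/2 := by
      have : limsup g atTop = L := rfl
      rw [this]; linarith
    obtain ⟨x₀, hx₀⟩ := eventually_atTop.1 (eventually_lt_of_limsup_lt hlt hgb)
    have hAθ : ∀ θ : ℝ, 0 < θ → A θ ≤ (L + ε/2) + 2*C*n/θ := by
      intro θ hθ
      refine Filter.limsup_le_of_le
        (isCoboundedUnder_le_of_le atTop fun x => (abs_le.1 (hval θ x)).1) ?_
      filter_upwards [eventually_ge_atTop (max x₀ 0)] with x hx
      have hx0 : 0 ≤ x := le_trans (le_max_right _ _) hx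
      have hxx0 : x₀ ≤ x := le_trans (le_max_left _ _) hx
      have hxy : x ≤ x + θ := by linarith
      have h1 : (∫ t in x..(x+θ), g t) ≤ (L + ε/2) * θ := by
        have hmono : (∫ t in x..(x+θ), g t) ≤ ∫ t in x..(x+θ), (L + ε/2) :=
          intervalIntegral.integral_mono_on hxy (hIg x (x+θ)) intervalIntegrable_const
            fun t ht => (hx₀ t (hxx0.trans ht.1)).le
        rw [intervalIntegral.integral_const, smul_eq_mul] at hmono
        calc (∫ t in x..(x+θ), g t) ≤ (x + θ - x) * (L + ε/2) := hmono
          _ = (L + ε/2) * θ := by ring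
      have h2 := telescope hf hbd n x (x+θ) hx0 hxy
      have h3 : (∫ t in x..(x+θ), f t) ≤ (L + ε/2)*θ + 2*C*n := by
        have := (abs_le.1 h2).2
        linarith
      have h4 : (1/θ) * (∫ t in x..(x+θ), f t) ≤ (1/θ) * ((L + ε/2)*θ + 2*C*n) :=
        mul_le_mul_of_nonneg_left h3 (by positivity)
      refine h4.trans (le_of_eq ?_)
      have hθ' : θ ≠ 0 := ne_of_gt hθ
      rw [one_div, inv_mul_eq_div, add_div, mul_div_cancel_right₀ _ hθ']
    have houter : limsup A atTop ≤ L + ε := by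
      refine Filter.limsup_le_of_le
        (isCoboundedUnder_le_of_le atTop fun θ => hAlb θ) ?_
      filter_upwards [eventually_ge_atTop (max 1 (2*C*n/(ε/2)))] with θ hθ
      have hθ1 : (1:ℝ) ≤ θ := le_trans (le_max_left _ _) hθ
      have hθpos : 0 < θ := lt_of_lt_of_le one_pos hθ1
      have hθ2 : 2*C*n/(ε/2) ≤ θ := le_trans (le_max_right _ _) hθ
      have hdiv : 2*C*n/θ ≤ ε/2 := by
        rw [div_le_iff₀ hθpos]
        have hcn : (0:ℝ) ≤ 2*C*n := by positivity
        have := (div_le_iff₀ (by linarith : (0:ℝ) < ε/2)).1 (le_refl (2*C*n/(ε/2)))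
        nlinarith
      have := hAθ θ hθpos
      linarith
    rw [hM1]
    exact houter
  refine ⟨key, fun L hL => ge_of_tendsto hL ?_⟩
  filter_upwards [eventually_ge_atTop 1] with n hn using key n hn
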